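/- Let u : [-L,L] × [-b,b] → ℝ be smooth with u = 0 on the boundary, u > 0 in the interior, and ∂u/∂y < 0 on (-L,L) × (0,b]. If additionally ∂u/∂y ≡ 0 on the edge {L} × (0,b], then ∂²u/∂x∂y ≥ 0 on {L} × [0,b], and hence y ↦ |Du(L,y)| = -∂u/∂x(L,y) is nonincreasing on [0,b]. -/

import Mathlib

open Set Filter Topology

/-- If `f` is differentiable at `a`, vanishes at `a`, and is nonnegative on a left
neighborhood `Ioo c a`, then `deriv f a ≤ 0`. -/
lemma deriv_nonpos_of_nonneg_left {f : ℝ → ℝ} {a c : ℝ} (hc : c < a)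
    (hf : DifferentiableAt ℝ f a) (h0 : f a = 0)
    (hnn : ∀ x ∈ Set.Ioo c a, 0 ≤ f x) : deriv f a ≤ 0 := by
  have hd := hf.hasDerivAt
  rw [hasDerivAt_iff_tendsto_slope] at hd
  have h2 : Filter.Tendsto (slope f a) (𝓝[<] a) (𝓝 (deriv f a)) :=
    hd.mono_left (nhdsWithin_mono _ (fun x hx => ne_of_lt hx))
  refine le_of_tendsto h2 ?_
  have hmem : Set.Ioo c a ∈ 𝓝[<] a :=
    Ioo_mem_nhdsLT hc
  filter_upwards [hmem] with x hx
  have hslope : slope f a x = f x / (x - a) := by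
    rw [slope_def_field, h0]
    ring
  rw [hslope]
  exact div_nonpos_of_nonneg_of_nonpos (hnn x hx) (by linarith [hx.2])

/-- If `f` is differentiable at `a`, vanishes at `a`, and is nonpositive on a left
neighborhood `Ioo c a`, then `0 ≤ deriv f a`. -/
lemma deriv_nonneg_of_nonpos_left {f : ℝ → ℝ} {a c : ℝ} (hc : c < a)
    (hf : DifferentiableAt ℝ f a) (h0 : f a = 0)
    (hnp : ∀ x ∈ Set.Ioo c a, f x ≤ 0) : 0 ≤ deriv f a := by
  have h := deriv_nonpos_of_nonneg_left (f := fun x => -f x) hc hf.neg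
    (by simp [h0]) (fun x hx => by simpa using hnp x hx)
  rw [show (fun x => -f x) = -f from rfl, deriv.neg] at h
  linarith

/-- Let `u` be smooth on the rectangle `[-L,L] × [-b,b]` with `u = 0` on the
boundary, `u > 0` in the interior, `∂u/∂y < 0` on `(-L,L) × (0,b]`, and
`∂u/∂y ≡ 0` on the edge `{L} × (0,b]`.  Then `∂²u/∂x∂y ≥ 0` on `{L} × [0,b]`,
and hence `y ↦ |Du(L,y)| = -∂u/∂x(L,y)` is nonincreasing on `[0,b]`. -/
theorem edge_slope_monotone (L b : ℝ) (hL : 0 < L) (hb : 0 < b)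
    (u : ℝ × ℝ → ℝ) (hu : ContDiff ℝ 2 u)
    (hbdry : ∀ p ∈ Set.Icc (-L) L ×ˢ Set.Icc (-b) b,
      (|p.1| = L ∨ |p.2| = b) → u p = 0)
    (hpos : ∀ p ∈ Set.Ioo (-L) L ×ˢ Set.Ioo (-b) b, 0 < u p)
    (hy_neg : ∀ x ∈ Set.Ioo (-L) L, ∀ y ∈ Set.Ioc 0 b,
      deriv (fun t => u (x, t)) y < 0)
    (hy_edge : ∀ y ∈ Set.Ioc 0 b, deriv (fun t => u (L, t)) y = 0) :
    (∀ y ∈ Set.Icc 0 b,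
      0 ≤ deriv (fun t => deriv (fun s => u (s, t)) L) y) ∧
    (∀ y ∈ Set.Ioc 0 b,
      Real.sqrt ((deriv (fun s => u (s, y)) L) ^ 2
          + (deriv (fun t => u (L, t)) y) ^ 2)
        = -(deriv (fun s => u (s, y)) L)) ∧
    (AntitoneOn (fun y => -(deriv (fun s => u (s, y)) L)) (Set.Icc 0 b)) := by
  have hudiff : Differentiable ℝ u := hu.differentiable (by norm_num)
  have hu1 : ContDiff ℝ 1 (fderiv ℝ u) := hu.fderiv_right (by norm_num)
  -- partial derivatives as fderiv evaluations
  have hP : ∀ x t : ℝ, deriv (fun s => u (s, t)) x = fderiv ℝ u (x, t) (1, 0) := by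
    intro x t
    have h1 : HasDerivAt (fun s : ℝ => (s, t)) ((1 : ℝ), (0 : ℝ)) x :=
      (hasDerivAt_id x).prodMk (hasDerivAt_const x t)
    exact ((hudiff (x, t)).hasFDerivAt.comp_hasDerivAt x h1).deriv
  have hQ : ∀ x t : ℝ, deriv (fun s => u (x, s)) t = fderiv ℝ u (x, t) (0, 1) := by
    intro x t
    have h1 : HasDerivAt (fun s : ℝ => (x, s)) ((0 : ℝ), (1 : ℝ)) t :=
      (hasDerivAt_const t x).prodMk (hasDerivAt_id t)
    exact ((hudiff (x, t)).hasFDerivAt.comp_hasDerivAt t h1).deriv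
  -- the functions P, Q (partial derivatives) and their smoothness
  set P : ℝ × ℝ → ℝ := fun p => fderiv ℝ u p (1, 0) with hPdef
  set Q : ℝ × ℝ → ℝ := fun p => fderiv ℝ u p (0, 1) with hQdef
  have hPc : ContDiff ℝ 1 P :=
    (ContinuousLinearMap.apply ℝ ℝ ((1 : ℝ), (0 : ℝ))).contDiff.comp hu1
  have hQc : ContDiff ℝ 1 Q :=
    (ContinuousLinearMap.apply ℝ ℝ ((0 : ℝ), (1 : ℝ))).contDiff.comp hu1
  -- the edge function g y = ∂u/∂x (L, y)
  set g : ℝ → ℝ := fun t => P (L, t) with hgdef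
  have hgc : ContDiff ℝ 1 g :=
    hPc.comp (contDiff_const.prodMk contDiff_id)
  -- second derivative of u
  have hf2 : ∀ p : ℝ × ℝ, HasFDerivAt (fderiv ℝ u) (fderiv ℝ (fderiv ℝ u) p) p :=
    fun p => (hu1.differentiable one_ne_zero p).hasFDerivAt
  -- derivative of g via second fderiv
  have hgd : ∀ y : ℝ, deriv g y = fderiv ℝ (fderiv ℝ u) (L, y) (0, 1) (1, 0) := by
    intro y
    have hA : HasFDerivAt P
        ((ContinuousLinearMap.apply ℝ ℝ ((1 : ℝ), (0 : ℝ))).comp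
          (fderiv ℝ (fderiv ℝ u) (L, y))) (L, y) :=
      (ContinuousLinearMap.apply ℝ ℝ ((1 : ℝ), (0 : ℝ))).hasFDerivAt.comp _ (hf2 (L, y))
    have h1 : HasDerivAt (fun s : ℝ => (L, s)) ((0 : ℝ), (1 : ℝ)) y :=
      (hasDerivAt_const y L).prodMk (hasDerivAt_id y)
    have := (hA.comp_hasDerivAt y h1).deriv
    simp at this
    exact this
  -- symmetry of second derivative
  have hsymm : ∀ y : ℝ, fderiv ℝ (fderiv ℝ u) (L, y) (0, 1) (1, 0)
      = fderiv ℝ (fderiv ℝ u) (L, y) (1, 0) (0, 1) := fun y =>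
    second_derivative_symmetric (fun p => (hudiff p).hasFDerivAt) (hf2 (L, y)) _ _
  -- derivative of x ↦ Q (x, y) at L
  have hQd : ∀ y : ℝ, deriv (fun x => Q (x, y)) L
      = fderiv ℝ (fderiv ℝ u) (L, y) (1, 0) (0, 1) := by
    intro y
    have hA : HasFDerivAt Q
        ((ContinuousLinearMap.apply ℝ ℝ ((0 : ℝ), (1 : ℝ))).comp
          (fderiv ℝ (fderiv ℝ u) (L, y))) (L, y) :=
      (ContinuousLinearMap.apply ℝ ℝ ((0 : ℝ), (1 : ℝ))).hasFDerivAt.comp _ (hf2 (L, y))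
    have h1 : HasDerivAt (fun s : ℝ => (s, y)) ((1 : ℝ), (0 : ℝ)) L :=
      (hasDerivAt_id L).prodMk (hasDerivAt_const L y)
    have := (hA.comp_hasDerivAt L h1).deriv
    simp at this
    exact this
  -- main claim on (0, b]
  have claim1 : ∀ y ∈ Set.Ioc 0 b, 0 ≤ deriv g y := by
    intro y hy
    rw [hgd y, hsymm y, ← hQd y]
    refine deriv_nonneg_of_nonpos_left (c := -L) (by linarith) ?_ ?_ ?_
    · exact ((hQc.differentiable one_ne_zero).comp
        ((differentiable_id.prodMk (differentiable_const y)))) L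
    · have := hy_edge y hy
      rw [hQ L y] at this
      exact this
    · intro x hx
      have := hy_neg x hx y hy
      rw [hQ x y] at this
      exact le_of_lt this
  -- extend to y = 0 by continuity of deriv g
  have hcont : Continuous (deriv g) := hgc.continuous_deriv le_rfl
  have claim1' : ∀ y ∈ Set.Icc 0 b, 0 ≤ deriv g y := by
    intro y hy
    rcases eq_or_lt_of_le hy.1 with h0 | h0
    · subst h0
      have ht : Filter.Tendsto (deriv g) (𝓝[>] (0 : ℝ)) (𝓝 (deriv g 0)) :=
        (hcont.continuousAt).continuousWithinAt.tendsto
      refine ge_of_tendsto ht ?_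
      filter_upwards [Ioc_mem_nhdsGT hb] with z hz
      exact claim1 z hz
    · exact claim1 y ⟨h0, hy.2⟩
  -- rewrite the first goal's function as g
  have hfun1 : (fun t => deriv (fun s => u (s, t)) L) = g := by
    funext t
    rw [hP L t]
  -- nonpositivity of ∂u/∂x on the edge
  have hgle : ∀ y ∈ Set.Ioc 0 b, g y ≤ 0 := by
    intro y hy
    have hdy : DifferentiableAt ℝ (fun s : ℝ => u (s, y)) L :=
      (hudiff.comp ((differentiable_id.prodMk (differentiable_const y)))) L
    have h0 : u (L, y) = 0 := by
      refine hbdry (L, y) ⟨⟨by linarith, le_refl L⟩, ⟨by linarith [hy.1], hy.2⟩⟩ ?_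
      left; simp [abs_of_pos hL]
    have hnn : ∀ x ∈ Set.Ioo (-L) L, 0 ≤ u (x, y) := by
      intro x hx
      rcases eq_or_lt_of_le hy.2 with hyb | hyb
      · subst hyb
        have : u (x, y) = 0 := by
          refine hbdry (x, y) ⟨⟨le_of_lt hx.1, le_of_lt hx.2⟩, ⟨by linarith, le_refl y⟩⟩ ?_
          right; simp [abs_of_pos hy.1]
        linarith
      · exact le_of_lt (hpos (x, y) ⟨hx, ⟨by linarith [hy.1], hyb⟩⟩)
    have := deriv_nonpos_of_nonneg_left (f := fun s => u (s, y)) (c := -L)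
      (by linarith) hdy h0 hnn
    rw [hP L y] at this
    exact this
  refine ⟨?_, ?_, ?_⟩
  · intro y hy
    rw [hfun1]
    exact claim1' y hy
  · intro y hy
    have h2 : deriv (fun t => u (L, t)) y = 0 := hy_edge y hy
    have h1 : deriv (fun s => u (s, y)) L ≤ 0 := by
      rw [hP L y]; exact hgle y hy
    rw [h2]
    rw [show (0 : ℝ) ^ 2 = 0 by ring, add_zero, Real.sqrt_sq_eq_abs,
      abs_of_nonpos h1]
  · have hmono : MonotoneOn g (Set.Icc 0 b) := by
      refine monotoneOn_of_deriv_nonneg (convex_Icc 0 b)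
        (hgc.continuous.continuousOn) ?_ ?_
      · exact ((hgc.differentiable one_ne_zero).differentiableOn)
      · intro x hx
        rw [interior_Icc] at hx
        exact claim1' x ⟨le_of_lt hx.1, le_of_lt hx.2⟩
    have : AntitoneOn (fun y => -g y) (Set.Icc 0 b) := fun x hx y hy hxy => by
      simpa using hmono hx hy hxy
    have hfun2 : (fun y => -(deriv (fun s => u (s, y)) L)) = fun y => -g y := by
      funext y
      rw [hP L y]
    rw [hfun2]
    exact this
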